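/- Let E be a module over L⁰ = L⁰(𝔉,ℝ) and (E, 𝒯) a topological L⁰-module (addition continuous and module multiplication L⁰ × E → E continuous with L⁰ carrying 𝒯_c). Then the following are equivalent: (1) the topology 𝒯 is induced by some family of L⁰-seminorms on E; (2) there exists a neighborhood base 𝒰 of 0 for 𝒯 such that every U ∈ 𝒰 is L⁰-convex, L⁰-absorbent and L⁰-balanced and has the relative countable concatenation property. -/

import Mathlib

noncomputable section

open MeasureTheory Set Pointwise Filter Topology

namespace PaperL0

variable {Ω : Type*} [MeasurableSpace Ω]

instance commRingL0 (μ : Measure Ω) : CommRing (Ω →ₘ[μ] ℝ) :=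
  { (inferInstance : AddCommGroup (Ω →ₘ[μ] ℝ)),
    (inferInstance : CommMonoid (Ω →ₘ[μ] ℝ)) with
    left_distrib := fun f g h => MeasureTheory.AEEqFun.toGerm_injective <| by
      simp [MeasureTheory.AEEqFun.mul_toGerm, MeasureTheory.AEEqFun.add_toGerm, mul_add]
    right_distrib := fun f g h => MeasureTheory.AEEqFun.toGerm_injective <| by
      simp [MeasureTheory.AEEqFun.mul_toGerm, MeasureTheory.AEEqFun.add_toGerm, add_mul]
    zero_mul := fun f => MeasureTheory.AEEqFun.toGerm_injective <| by
      simp [MeasureTheory.AEEqFun.mul_toGerm, MeasureTheory.AEEqFun.zero_toGerm]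
    mul_zero := fun f => MeasureTheory.AEEqFun.toGerm_injective <| by
      simp [MeasureTheory.AEEqFun.mul_toGerm, MeasureTheory.AEEqFun.zero_toGerm] }

variable (μ : Measure Ω)

/-- `L⁰₊`, the set of nonnegative elements of `L⁰`. -/
def Lpos : Set (Ω →ₘ[μ] ℝ) := {ξ | 0 ≤ ξ}

/-- `L⁰₊₊`, the set of elements of `L⁰` which are `> 0` a.e. on `Ω`. -/
def Lspos : Set (Ω →ₘ[μ] ℝ) := {ξ | ∀ᵐ ω ∂μ, 0 < ξ ω}

/-- The absolute value `|ξ|` of an element of `L⁰`. -/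
def aabs {μ : Measure Ω} (ξ : Ω →ₘ[μ] ℝ) : Ω →ₘ[μ] ℝ := ξ ⊔ -ξ

/-- `B_ε = {ξ ∈ L⁰ : |ξ| ≤ ε}`. -/
def ball (ε : Ω →ₘ[μ] ℝ) : Set (Ω →ₘ[μ] ℝ) := {ξ | aabs ξ ≤ ε}

open Classical in
/-- `Ĩ_A`, the equivalence class of the indicator function of a (measurable) set `A`. -/
def ind (A : Set Ω) : Ω →ₘ[μ] ℝ :=
  if h : MeasurableSet A then
    AEEqFun.mk (A.indicator fun _ => (1 : ℝ))
      ((measurable_const.indicator h).aestronglyMeasurable)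
  else 0

/-- A countable measurable partition of `Ω`. -/
def IsMeasPartition (A : ℕ → Set Ω) : Prop :=
  (∀ n, MeasurableSet (A n)) ∧ Pairwise (Function.onFun Disjoint A) ∧ (⋃ n, A n) = Set.univ

variable {E : Type*} [AddCommGroup E] [Module (Ω →ₘ[μ] ℝ) E]

/-- `L⁰`-convexity of a subset of an `L⁰`-module. -/
def IsL0Convex (U : Set E) : Prop :=
  ∀ x ∈ U, ∀ y ∈ U, ∀ ξ : Ω →ₘ[μ] ℝ, 0 ≤ ξ → ξ ≤ 1 → ξ • x + (1 - ξ) • y ∈ U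

/-- `L⁰`-absorbency of a subset of an `L⁰`-module. -/
def IsL0Absorbent (U : Set E) : Prop := ∀ x : E, ∃ ξ ∈ Lspos μ, x ∈ ξ • U

/-- `L⁰`-balancedness of a subset of an `L⁰`-module. -/
def IsL0Balanced (U : Set E) : Prop :=
  ∀ x ∈ U, ∀ ξ : Ω →ₘ[μ] ℝ, aabs ξ ≤ 1 → ξ • x ∈ U

/-- An `L⁰`-seminorm on an `L⁰`-module. -/
structure IsL0Seminorm (p : E → Ω →ₘ[μ] ℝ) : Prop where
  nonneg : ∀ x, 0 ≤ p x
  homog : ∀ (ξ : Ω →ₘ[μ] ℝ) (x : E), p (ξ • x) = aabs ξ * p x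
  triangle : ∀ x y, p (x + y) ≤ p x + p y

/-- The countable concatenation property for a subset of an `L⁰`-module. -/
def HasCCP (G : Set E) : Prop :=
  ∀ x : ℕ → E, (∀ n, x n ∈ G) → ∀ A : ℕ → Set Ω, IsMeasPartition A →
    (∃ y : E, ∀ n, ind μ (A n) • y = ind μ (A n) • x n) ∧
      ∀ y : E, (∀ n, ind μ (A n) • y = ind μ (A n) • x n) → y ∈ G

/-- The relative countable concatenation property for a subset of an `L⁰`-module. -/
def HasRelCCP (G : Set E) : Prop :=
  ∀ x : ℕ → E, (∀ n, x n ∈ G) → ∀ A : ℕ → Set Ω, IsMeasPartition A →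
    ∀ y : E, (∀ n, ind μ (A n) • y = ind μ (A n) • x n) → y ∈ G

/-- A `P`-atom of a measure. -/
def IsPAtom (A : Set Ω) : Prop :=
  MeasurableSet A ∧ 0 < μ A ∧ ∀ B, MeasurableSet B → B ⊆ A → μ B = 0 ∨ μ B = μ A

end PaperL0

open PaperL0


namespace Stmt18
set_option linter.unusedSectionVars false

open MeasureTheory

variable {Ω : Type*} [MeasurableSpace Ω] {P : Measure Ω} [IsProbabilityMeasure P]

local notation "L0" => Ω →ₘ[P] ℝ

theorem le_iff {ξ η : L0} : ξ ≤ η ↔ ∀ᵐ ω ∂P, ξ ω ≤ η ω := AEEqFun.coeFn_le.symm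

theorem ext_ae {ξ η : L0} (h : ∀ᵐ ω ∂P, ξ ω = η ω) : ξ = η := AEEqFun.ext h

theorem coeFn_aabs (ξ : L0) : ⇑(aabs ξ) =ᵐ[P] fun ω => |ξ ω| := AEEqFun.coeFn_abs ξ

theorem coeFn_two : ⇑(2 : L0) =ᵐ[P] fun _ => (2:ℝ) := by
  have h1 : ((2:L0) : Ω → ℝ) =ᵐ[P] ⇑((1:L0) + 1) := by norm_num
  filter_upwards [h1, AEEqFun.coeFn_add (1:L0) 1, AEEqFun.coeFn_one (β := ℝ) (μ := P)]
    with ω h1 h2 h3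
  rw [h1, h2]; simp [h3]; norm_num

/-- a.e.-defined inverse -/
def ainv (ξ : L0) : L0 := AEEqFun.compMeasurable Inv.inv measurable_inv ξ

theorem coeFn_ainv (ξ : L0) : ⇑(ainv ξ) =ᵐ[P] fun ω => (ξ ω)⁻¹ :=
  AEEqFun.coeFn_compMeasurable _ _ _

theorem mul_ainv {ξ : L0} (h : ∀ᵐ ω ∂P, ξ ω ≠ 0) : ξ * ainv ξ = 1 := by
  apply ext_ae
  filter_upwards [h, AEEqFun.coeFn_mul ξ (ainv ξ), coeFn_ainv ξ,
    AEEqFun.coeFn_one (β := ℝ) (μ := P)] with ω h0 h1 h2 h3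
  rw [h1, h3]; simp [h2, mul_inv_cancel₀ h0]

theorem mem_Lspos {ξ : L0} : ξ ∈ Lspos P ↔ ∀ᵐ ω ∂P, 0 < ξ ω := Iff.rfl

theorem Lspos_ne_zero {ξ : L0} (h : ξ ∈ Lspos P) : ∀ᵐ ω ∂P, ξ ω ≠ 0 := by
  filter_upwards [h] with ω h; exact ne_of_gt h

theorem Lspos_nonneg {ξ : L0} (h : ξ ∈ Lspos P) : 0 ≤ ξ := by
  rw [le_iff]
  filter_upwards [h, AEEqFun.coeFn_zero (β := ℝ) (μ := P)] with ω h1 h2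
  rw [h2]; exact le_of_lt h1

theorem coeFn_zero' : ⇑(0 : L0) =ᵐ[P] fun _ => (0:ℝ) := AEEqFun.coeFn_zero

theorem coeFn_one' : ⇑(1 : L0) =ᵐ[P] fun _ => (1:ℝ) := AEEqFun.coeFn_one

theorem one_mem_Lspos : (1 : L0) ∈ Lspos P := by
  filter_upwards [coeFn_one'] with ω h; rw [h]; norm_num

theorem ainv_mem_Lspos {ξ : L0} (h : ξ ∈ Lspos P) : ainv ξ ∈ Lspos P := by
  filter_upwards [h, coeFn_ainv ξ] with ω h1 h2
  rw [h2]; exact inv_pos.2 h1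

theorem mul_mem_Lspos {ξ η : L0} (h1 : ξ ∈ Lspos P) (h2 : η ∈ Lspos P) :
    ξ * η ∈ Lspos P := by
  filter_upwards [h1, h2, AEEqFun.coeFn_mul ξ η] with ω a b c
  rw [c]; exact mul_pos a b

theorem add_mem_Lspos {ξ η : L0} (h1 : 0 ≤ ξ) (h2 : η ∈ Lspos P) :
    ξ + η ∈ Lspos P := by
  rw [le_iff] at h1
  filter_upwards [h1, h2, AEEqFun.coeFn_add ξ η, coeFn_zero'] with ω a b c d
  rw [c]; simp only [Pi.add_apply]
  rw [d] at a; positivity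

open Classical in
theorem coeFn_ind {A : Set Ω} (hA : MeasurableSet A) :
    ⇑(ind P A) =ᵐ[P] A.indicator fun _ => (1:ℝ) := by
  rw [ind, dif_pos hA]; exact AEEqFun.coeFn_mk _ _

theorem ind_nonneg {A : Set Ω} (hA : MeasurableSet A) : 0 ≤ ind P A := by
  rw [le_iff]
  filter_upwards [coeFn_ind hA, coeFn_zero'] with ω h1 h2
  rw [h1, h2]; by_cases h : ω ∈ A <;> simp [Set.indicator_apply, h]

theorem ind_le_one {A : Set Ω} (hA : MeasurableSet A) : ind P A ≤ 1 := by
  rw [le_iff]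
  filter_upwards [coeFn_ind hA, coeFn_one'] with ω h1 h2
  rw [h1, h2]; by_cases h : ω ∈ A <;> simp [Set.indicator_apply, h]

theorem ind_mul_ind {A : Set Ω} (hA : MeasurableSet A) :
    ind P A * ind P A = ind P A := by
  apply ext_ae
  filter_upwards [coeFn_ind hA, AEEqFun.coeFn_mul (ind P A) (ind P A)] with ω h1 h2
  rw [h2]; simp only [Pi.mul_apply, h1]
  by_cases h : ω ∈ A <;> simp [Set.indicator_apply, h]

/-- constant function as an element of L0 -/
def cst (r : ℝ) : L0 := AEEqFun.const Ω r

theorem coeFn_cst (r : ℝ) : ⇑(cst (P := P) r) =ᵐ[P] fun _ => r := AEEqFun.coeFn_const _ _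

theorem cst_mem_Lspos {r : ℝ} (hr : 0 < r) : cst (P := P) r ∈ Lspos P := by
  filter_upwards [coeFn_cst r] with ω h; rw [h]; exact hr

theorem le_of_forall_add {ξ η : L0} (h : ∀ δ ∈ Lspos P, ξ ≤ η + δ) : ξ ≤ η := by
  have h' : ∀ n : ℕ, ∀ᵐ ω ∂P, ξ ω ≤ η ω + (1 / (n + 1) : ℝ) := by
    intro n
    have := h (cst (1 / (n + 1 : ℝ))) (cst_mem_Lspos (by positivity))
    rw [le_iff] at this
    filter_upwards [this, AEEqFun.coeFn_add η (cst (1/(n+1:ℝ))), coeFn_cst (P := P) (1/(n+1:ℝ))]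
      with ω a b c
    rw [b] at a; simp only [Pi.add_apply, c] at a; exact a
  rw [le_iff]
  filter_upwards [MeasureTheory.ae_all_iff.2 h'] with ω hω
  refine le_of_forall_pos_le_add fun ε hε => ?_
  obtain ⟨n, hn⟩ := exists_nat_one_div_lt hε
  exact (hω n).trans (by linarith)

section Top

variable {E : Type*} [AddCommGroup E] [Module (Ω →ₘ[P] ℝ) E]
variable [tE : TopologicalSpace E] [tL : TopologicalSpace (Ω →ₘ[P] ℝ)]
variable (haddcont : Continuous fun p : E × E => p.1 + p.2)
variable (hsmulcont : Continuous fun p : (Ω →ₘ[P] ℝ) × E => p.1 • p.2)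

include haddcont in
theorem nhds_translate {s : Set E} {y : E} (h : s ∈ nhds y) : {u | y + u ∈ s} ∈ nhds (0 : E) := by
  have hc : Continuous fun u : E => y + u :=
    haddcont.comp (continuous_const.prodMk continuous_id)
  have := hc.continuousAt (x := (0 : E)).preimage_mem_nhds (by simpa using h)
  simpa [Set.preimage] using this

include haddcont in
theorem isOpen_iff_nhds_add {V : Set E} :
    IsOpen V ↔ ∀ y ∈ V, {u | y + u ∈ V} ∈ nhds (0 : E) := by
  constructor
  · intro hV y hy
    exact nhds_translate haddcont (hV.mem_nhds hy)
  · intro h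
    rw [isOpen_iff_mem_nhds]
    intro y hy
    have hc : Continuous fun x : E => x + (-y) :=
      haddcont.comp (continuous_id.prodMk continuous_const)
    have h2 := hc.continuousAt (x := y).preimage_mem_nhds (by simpa using h y hy)
    refine Filter.mem_of_superset h2 ?_
    intro x hx
    simp only [Set.mem_preimage, Set.mem_setOf_eq] at hx
    have : y + (x + -y) = x := by abel
    rwa [this] at hx

include hsmulcont in
theorem smul_set_mem_nhds {U : Set E} (hU : U ∈ nhds (0 : E)) {ε : Ω →ₘ[P] ℝ}
    (hε : ε ∈ Lspos P) : ε • U ∈ nhds (0 : E) := by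
  have hc : Continuous fun x : E => ainv ε • x :=
    hsmulcont.comp (continuous_const.prodMk continuous_id)
  have h2 := hc.continuousAt (x := (0 : E)).preimage_mem_nhds (by simpa using hU)
  refine Filter.mem_of_superset h2 ?_
  intro x hx
  simp only [Set.mem_preimage] at hx
  refine ⟨ainv ε • x, hx, ?_⟩
  show ε • ainv ε • x = x
  rw [← mul_smul, mul_ainv (Lspos_ne_zero hε), one_smul]

end Top

theorem aabs_of_nonneg {ξ : L0} (h : 0 ≤ ξ) : aabs ξ = ξ := by
  rw [le_iff] at h
  apply ext_ae
  filter_upwards [h, coeFn_aabs ξ, coeFn_zero'] with ω a b c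
  rw [b, abs_of_nonneg]; rw [c] at a; exact a

theorem aabs_zero : aabs (0 : L0) = 0 := by
  show (0:L0) ⊔ -0 = 0; rw [neg_zero, sup_idem]

theorem coeFn_finsetSum {ι : Type*} (s : Finset ι) (f : ι → L0) :
    ⇑(∑ i ∈ s, f i) =ᵐ[P] fun ω => ∑ i ∈ s, f i ω := by
  classical
  induction s using Finset.induction_on with
  | empty => simpa using coeFn_zero' (P := P)
  | insert a s' hx ih =>
    rw [Finset.sum_insert hx]
    filter_upwards [AEEqFun.coeFn_add (f a) (∑ i ∈ s', f i), ih] with ω h1 h2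
    rw [h1]; simp only [Pi.add_apply, h2, Finset.sum_insert hx]

section Sem

variable {E : Type*} [AddCommGroup E] [Module (Ω →ₘ[P] ℝ) E]

theorem sem_zero {p : E → Ω →ₘ[P] ℝ} (hp : IsL0Seminorm P p) : p 0 = 0 := by
  have := hp.homog 0 0
  rwa [zero_smul, aabs_zero, zero_mul] at this

theorem sem_ind_smul {p : E → Ω →ₘ[P] ℝ} (hp : IsL0Seminorm P p) {A : Set Ω}
    (hA : MeasurableSet A) (y : E) : p (ind P A • y) = ind P A * p y := by
  rw [hp.homog, aabs_of_nonneg (ind_nonneg hA)]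

/-- the ball associated to a finite family of seminorms -/
def qball (Qs : Set (E → Ω →ₘ[P] ℝ)) (ε : Ω →ₘ[P] ℝ) : Set E :=
  {x | ∀ q ∈ Qs, q x ≤ ε}

theorem qball_convex {Qs : Set (E → Ω →ₘ[P] ℝ)} (hQs : ∀ q ∈ Qs, IsL0Seminorm P q)
    {ε : Ω →ₘ[P] ℝ} : IsL0Convex P (qball Qs ε) := by
  intro x hx y hy ξ h0 h1
  intro q hq
  have sem := hQs q hq
  calc q (ξ • x + (1 - ξ) • y) ≤ q (ξ • x) + q ((1 - ξ) • y) := sem.triangle _ _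
    _ = aabs ξ * q x + aabs (1 - ξ) * q y := by rw [sem.homog, sem.homog]
    _ ≤ ε := by
      rw [le_iff] at h0 h1 ⊢
      have hsub : ⇑(1 - ξ) =ᵐ[P] fun ω => 1 - ξ ω := by
        filter_upwards [AEEqFun.coeFn_sub (1 : Ω →ₘ[P] ℝ) ξ, coeFn_one'] with ω a b
        rw [a]; simp [b]
      filter_upwards [h0, h1, hx q hq |> le_iff.1, hy q hq |> le_iff.1,
        le_iff.1 (sem.nonneg x), le_iff.1 (sem.nonneg y),
        AEEqFun.coeFn_add (aabs ξ * q x) (aabs (1-ξ) * q y),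
        AEEqFun.coeFn_mul (aabs ξ) (q x), AEEqFun.coeFn_mul (aabs (1-ξ)) (q y),
        coeFn_aabs ξ, coeFn_aabs (1-ξ), hsub, coeFn_zero', coeFn_one']
        with ω a0 a1 ax ay nx ny cadd cm1 cm2 cab1 cab2 csub cz co
      rw [cadd]; simp only [Pi.add_apply]
      rw [cm1, cm2]; simp only [Pi.mul_apply]
      rw [cab1, cab2, csub]
      rw [cz] at a0 nx ny; rw [co] at a1
      rw [abs_of_nonneg a0, abs_of_nonneg (by linarith)]
      nlinarith

theorem qball_balanced {Qs : Set (E → Ω →ₘ[P] ℝ)} (hQs : ∀ q ∈ Qs, IsL0Seminorm P q)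
    {ε : Ω →ₘ[P] ℝ} : IsL0Balanced P (qball Qs ε) := by
  intro x hx ξ hξ
  intro q hq
  have sem := hQs q hq
  rw [sem.homog]
  rw [le_iff] at hξ ⊢
  filter_upwards [hξ, le_iff.1 (hx q hq), le_iff.1 (sem.nonneg x),
    AEEqFun.coeFn_mul (aabs ξ) (q x), coeFn_aabs ξ, coeFn_zero', coeFn_one']
    with ω a b c d e f g
  rw [d]; simp only [Pi.mul_apply]
  rw [e] at a ⊢; rw [f] at c; rw [g] at a
  nlinarith [abs_nonneg (ξ ω)]

theorem qball_absorbent {Qs : Set (E → Ω →ₘ[P] ℝ)} (hQs : ∀ q ∈ Qs, IsL0Seminorm P q)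
    (hfin : Qs.Finite) {ε : Ω →ₘ[P] ℝ} (hε : ε ∈ Lspos P) :
    IsL0Absorbent P (qball Qs ε) := by
  intro x
  classical
  set S : Ω →ₘ[P] ℝ := ∑ q ∈ hfin.toFinset, q x with hS
  set ξ : Ω →ₘ[P] ℝ := 1 + S * ainv ε with hξdef
  have hSnn : ∀ᵐ ω ∂P, 0 ≤ S ω ∧ ∀ q ∈ hfin.toFinset, q x ω ≤ S ω := by
    have h1 : ∀ᵐ ω ∂P, ∀ q ∈ hfin.toFinset, 0 ≤ q x ω := by
      have : ∀ᵐ ω ∂P, ∀ q ∈ Qs, 0 ≤ q x ω := by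
        rw [MeasureTheory.ae_ball_iff hfin.countable]
        intro q hq
        filter_upwards [le_iff.1 ((hQs q hq).nonneg x), coeFn_zero'] with ω a b
        rw [b] at a; exact a
      filter_upwards [this] with ω h q hq
      exact h q (by simpa using hq)
    filter_upwards [h1, coeFn_finsetSum hfin.toFinset (fun q => q x)] with ω a b
    rw [hS, b]
    refine ⟨Finset.sum_nonneg a, fun q hq => Finset.single_le_sum a hq⟩
  have hξpos : ∀ᵐ ω ∂P, 0 < ξ ω ∧ ξ ω = 1 + S ω * (ε ω)⁻¹ := by
    filter_upwards [hSnn, hε, AEEqFun.coeFn_add (1 : Ω →ₘ[P] ℝ) (S * ainv ε),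
      AEEqFun.coeFn_mul S (ainv ε), coeFn_ainv ε, coeFn_one'] with ω a b c d e f
    have hξω : ξ ω = 1 + S ω * (ε ω)⁻¹ := by
      rw [hξdef, c]; simp only [Pi.add_apply, f, d, Pi.mul_apply, e]
    refine ⟨?_, hξω⟩
    rw [hξω]; have := a.1; positivity
  have hξspos : ξ ∈ Lspos P := by filter_upwards [hξpos] with ω h; exact h.1
  refine ⟨ξ, hξspos, ainv ξ • x, ?_, ?_⟩
  · intro q hq
    have sem := hQs q hq
    rw [sem.homog]
    rw [le_iff]
    filter_upwards [hξpos, hSnn, hε, AEEqFun.coeFn_mul (aabs (ainv ξ)) (q x),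
      coeFn_aabs (ainv ξ), coeFn_ainv ξ, le_iff.1 (sem.nonneg x), coeFn_zero',
      coeFn_ainv ε] with ω a b c d e f g h i
    rw [d]; simp only [Pi.mul_apply]
    rw [e, f, abs_of_nonneg (le_of_lt (inv_pos.2 a.1))]
    rw [h] at g
    have hqx : q x ω ≤ S ω := b.2 q (by simpa using hq)
    have h2 : q x ω ≤ ξ ω * ε ω := by
      rw [a.2]
      have : S ω * (ε ω)⁻¹ * ε ω = S ω := by field_simp
      nlinarith
    rw [inv_mul_le_iff₀ a.1]
    nlinarith
  · show ξ • ainv ξ • x = x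
    rw [← mul_smul, mul_ainv (Lspos_ne_zero hξspos), one_smul]

theorem qball_relccp {Qs : Set (E → Ω →ₘ[P] ℝ)} (hQs : ∀ q ∈ Qs, IsL0Seminorm P q)
    {ε : Ω →ₘ[P] ℝ} : HasRelCCP P (qball Qs ε) := by
  intro x hx A hA y hy
  intro q hq
  have sem := hQs q hq
  have key : ∀ n, ind P (A n) * q y = ind P (A n) * q (x n) := by
    intro n
    rw [← sem_ind_smul sem (hA.1 n), ← sem_ind_smul sem (hA.1 n), hy n]
  rw [le_iff]
  have hae : ∀ᵐ ω ∂P, ∀ n : ℕ,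
      (ind P (A n)) ω * (q y) ω = (ind P (A n)) ω * (q (x n)) ω ∧
      (ind P (A n)) ω = (A n).indicator (fun _ => (1:ℝ)) ω ∧ q (x n) ω ≤ ε ω := by
    rw [MeasureTheory.ae_all_iff]
    intro n
    have h1 : (fun ω => (ind P (A n)) ω * (q y) ω) =ᵐ[P]
        (fun ω => (ind P (A n)) ω * (q (x n)) ω) := by
      have := key n
      filter_upwards [AEEqFun.coeFn_mul (ind P (A n)) (q y),
        AEEqFun.coeFn_mul (ind P (A n)) (q (x n))] with ω a b
      rw [← Pi.mul_apply ⇑(ind P (A n)), ← a, this, b]; rfl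
    filter_upwards [h1, coeFn_ind (hA.1 n), le_iff.1 (hx n q hq)] with ω a b c
    exact ⟨a, b, c⟩
  filter_upwards [hae] with ω h
  obtain ⟨n, hn⟩ : ∃ n, ω ∈ A n := by
    have := hA.2.2
    have : ω ∈ ⋃ n, A n := by rw [this]; trivial
    simpa using this
  obtain ⟨h1, h2, h3⟩ := h n
  rw [h2, Set.indicator_of_mem hn, one_mul, one_mul] at h1
  rw [h1]; exact h3

end Sem

section Forward

variable {E : Type*} [AddCommGroup E] [Module (Ω →ₘ[P] ℝ) E] [tE : TopologicalSpace E]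

theorem forward_dir
    (Ps : Set (E → Ω →ₘ[P] ℝ)) (hPs : ∀ p ∈ Ps, IsL0Seminorm P p)
    (hopen : ∀ V : Set E, IsOpen V ↔ ∀ y ∈ V, ∃ Qs : Set (E → Ω →ₘ[P] ℝ),
      Qs.Finite ∧ Qs ⊆ Ps ∧
      ∃ ε ∈ Lspos P, ∀ u : E, (∀ q ∈ Qs, q u ≤ ε) → y + u ∈ V) :
    ∃ 𝒰 : Set (Set E), (nhds (0:E)).HasBasis (· ∈ 𝒰) id ∧
      ∀ U ∈ 𝒰, IsL0Convex P U ∧ IsL0Absorbent P U ∧ IsL0Balanced P U ∧ HasRelCCP P U := by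
  refine ⟨{U | ∃ Qs : Set (E → Ω →ₘ[P] ℝ), Qs.Finite ∧ Qs ⊆ Ps ∧
      ∃ ε ∈ Lspos P, U = qball Qs ε}, ?_, ?_⟩
  · rw [Filter.hasBasis_iff]
    intro t
    constructor
    · intro ht
      obtain ⟨V, hVt, hVo, h0V⟩ := mem_nhds_iff.1 ht
      obtain ⟨Qs, hfin, hsub, ε, hε, hb⟩ := (hopen V).1 hVo 0 h0V
      exact ⟨qball Qs ε, ⟨Qs, hfin, hsub, ε, hε, rfl⟩,
        fun u hu => hVt (by simpa using hb u hu)⟩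
    · rintro ⟨U, ⟨Qs, hfin, hsub, ε, hε, rfl⟩, hUt⟩
      set W : Set E := {y | ∃ δ ∈ Lspos P, ∀ q ∈ Qs, q y ≤ ε - δ} with hW
      have hWopen : IsOpen W := by
        rw [hopen]
        rintro y ⟨δ, hδ, hy⟩
        refine ⟨Qs, hfin, hsub, cst (1/2) * δ,
          mul_mem_Lspos (cst_mem_Lspos (by norm_num)) hδ, fun u hu => ?_⟩
        refine ⟨cst (1/2) * δ, mul_mem_Lspos (cst_mem_Lspos (by norm_num)) hδ,
          fun q hq => ?_⟩
        have sem := hPs q (hsub hq)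
        refine le_trans (sem.triangle y u) ?_
        rw [le_iff]
        filter_upwards [le_iff.1 (hy q hq), le_iff.1 (hu q hq), hδ,
          AEEqFun.coeFn_add (q y) (q u), AEEqFun.coeFn_sub ε δ,
          AEEqFun.coeFn_sub ε (cst (1/2) * δ), AEEqFun.coeFn_mul (cst (1/2)) δ,
          coeFn_cst (P := P) (1/2)] with ω a b c d e f g h
        rw [d, f]; simp only [Pi.add_apply, Pi.sub_apply]
        rw [e] at a
        rw [g] at b ⊢; simp only [Pi.mul_apply, h] at b ⊢
        simp only [Pi.sub_apply] at a
        linarith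
      have h0W : (0 : E) ∈ W := by
        refine ⟨cst (1/2) * ε, mul_mem_Lspos (cst_mem_Lspos (by norm_num)) hε,
          fun q hq => ?_⟩
        rw [sem_zero (hPs q (hsub hq)), le_iff]
        filter_upwards [hε, AEEqFun.coeFn_sub ε (cst (1/2) * ε),
          AEEqFun.coeFn_mul (cst (1/2)) ε, coeFn_cst (P := P) (1/2), coeFn_zero']
          with ω a b c d e
        rw [b, e]; simp only [Pi.sub_apply]
        rw [c]; simp only [Pi.mul_apply, d]
        linarith
      have hWU : W ⊆ qball Qs ε := by
        rintro y ⟨δ, hδ, hy⟩ q hq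
        refine le_trans (hy q hq) ?_
        rw [le_iff]
        filter_upwards [hδ, AEEqFun.coeFn_sub ε δ] with ω a b
        rw [b]; simp only [Pi.sub_apply]; linarith
      exact mem_nhds_iff.2 ⟨W, hWU.trans hUt, hWopen, h0W⟩
  · rintro U ⟨Qs, hfin, hsub, ε, hε, rfl⟩
    have hQs : ∀ q ∈ Qs, IsL0Seminorm P q := fun q hq => hPs q (hsub hq)
    exact ⟨qball_convex hQs, qball_absorbent hQs hfin hε, qball_balanced hQs,
      qball_relccp hQs⟩

end Forward

/-- measurable representative -/
def mrep (ξ : L0) : Ω → ℝ := (ξ.aestronglyMeasurable.aemeasurable).mk ξ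

theorem mrep_measurable (ξ : L0) : Measurable (mrep ξ) :=
  (ξ.aestronglyMeasurable.aemeasurable).measurable_mk

theorem mrep_ae (ξ : L0) : ⇑ξ =ᵐ[P] mrep ξ :=
  (ξ.aestronglyMeasurable.aemeasurable).ae_eq_mk

theorem inf_mem_Lspos {ξ η : L0} (h1 : ξ ∈ Lspos P) (h2 : η ∈ Lspos P) :
    ξ ⊓ η ∈ Lspos P := by
  filter_upwards [h1, h2, AEEqFun.coeFn_inf ξ η] with ω a b c
  rw [c]; exact lt_inf_iff.2 ⟨a, b⟩

theorem arctan_integrable {f : Ω → ℝ} (hf : AEStronglyMeasurable f P) :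
    Integrable (fun ω => Real.arctan (f ω)) P := by
  refine ⟨Real.continuous_arctan.comp_aestronglyMeasurable hf, ?_⟩
  refine HasFiniteIntegral.of_bounded (C := Real.pi / 2) (Filter.Eventually.of_forall ?_)
  intro ω
  rw [Real.norm_eq_abs, abs_le]
  exact ⟨(Real.neg_pi_div_two_lt_arctan _).le, (Real.arctan_lt_pi_div_two _).le⟩


theorem ae_mul (ξ η : L0) : ∀ᵐ ω ∂P, (ξ * η) ω = ξ ω * η ω := by
  filter_upwards [AEEqFun.coeFn_mul ξ η] with ω h; rw [h]; rfl

theorem ae_add (ξ η : L0) : ∀ᵐ ω ∂P, (ξ + η) ω = ξ ω + η ω := by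
  filter_upwards [AEEqFun.coeFn_add ξ η] with ω h; rw [h]; rfl

theorem ae_sub (ξ η : L0) : ∀ᵐ ω ∂P, (ξ - η) ω = ξ ω - η ω := by
  filter_upwards [AEEqFun.coeFn_sub ξ η] with ω h; rw [h]; rfl

theorem ae_ainv (ξ : L0) : ∀ᵐ ω ∂P, (ainv ξ) ω = (ξ ω)⁻¹ := coeFn_ainv ξ

theorem ae_aabs (ξ : L0) : ∀ᵐ ω ∂P, (aabs ξ) ω = |ξ ω| := coeFn_aabs ξ

theorem ae_one : ∀ᵐ ω ∂P, (1 : L0) ω = 1 := coeFn_one'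

theorem ae_zero : ∀ᵐ ω ∂P, (0 : L0) ω = 0 := coeFn_zero'

theorem ae_ind {A : Set Ω} (hA : MeasurableSet A) :
    ∀ᵐ ω ∂P, (ind P A) ω = A.indicator (fun _ => (1:ℝ)) ω := coeFn_ind hA

theorem ae_cst (r : ℝ) : ∀ᵐ ω ∂P, (cst (P := P) r) ω = r := coeFn_cst r

section Gauge


variable {E : Type*} [AddCommGroup E] [Module (Ω →ₘ[P] ℝ) E] {U : Set E}

theorem smul_mem_inf (hconv : IsL0Convex P U) {ξ η : L0} {x : E}
    (hξ : x ∈ ξ • U) (hη : x ∈ η • U) : x ∈ (ξ ⊓ η) • U := by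
  obtain ⟨u, hu, hxu'⟩ := hξ
  obtain ⟨v, hv, hxv'⟩ := hη
  have hxu : ξ • u = x := hxu'
  have hxv : η • v = x := hxv'
  set A : Set Ω := {ω | mrep ξ ω ≤ mrep η ω} with hAdef
  have hA : MeasurableSet A := measurableSet_le (mrep_measurable ξ) (mrep_measurable η)
  set e : L0 := ind P A with hedef
  have hc1 : (ξ ⊓ η) * e = e * ξ := by
    apply ext_ae
    filter_upwards [AEEqFun.coeFn_mul (ξ ⊓ η) e, AEEqFun.coeFn_mul e ξ,
      AEEqFun.coeFn_inf ξ η, coeFn_ind hA, mrep_ae ξ, mrep_ae η] with ω a b c d f g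
    rw [a, b]; simp only [Pi.mul_apply, c, Pi.inf_apply, hedef, d]
    by_cases h : ω ∈ A
    · rw [Set.indicator_of_mem h]
      have : ξ ω ≤ η ω := by rw [f, g]; exact h
      simp [min_eq_left this, mul_comm]
    · simp [Set.indicator_of_notMem h]
  have hc2 : (ξ ⊓ η) * (1 - e) = (1 - e) * η := by
    apply ext_ae
    filter_upwards [AEEqFun.coeFn_mul (ξ ⊓ η) (1 - e), AEEqFun.coeFn_mul (1 - e) η,
      AEEqFun.coeFn_inf ξ η, coeFn_ind hA, mrep_ae ξ, mrep_ae η,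
      AEEqFun.coeFn_sub (1 : L0) e, coeFn_one'] with ω a b c d f g hsub hone
    rw [a, b]; simp only [Pi.mul_apply, c, Pi.inf_apply, hsub, Pi.sub_apply, hone]; simp only [hedef, d]
    by_cases h : ω ∈ A
    · simp [Set.indicator_of_mem h]
    · rw [Set.indicator_of_notMem h]
      have : η ω ≤ ξ ω := by rw [f, g]; exact le_of_lt (not_le.1 h)
      simp [min_eq_right this, mul_comm]
  have h0e : (0 : L0) ≤ e := ind_nonneg hA
  have h1e : e ≤ 1 := ind_le_one hA
  refine ⟨e • u + (1 - e) • v, hconv u hu v hv e h0e h1e, ?_⟩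
  show (ξ ⊓ η) • (e • u + (1 - e) • v) = x
  rw [smul_add, ← mul_smul, ← mul_smul, hc1, hc2, mul_smul, mul_smul, hxu, hxv,
    ← add_smul]
  have : e + (1 - e) = 1 := by ring
  rw [this, one_smul]

theorem gauge_exists (hconv : IsL0Convex P U) (habs : IsL0Absorbent P U)
    (hbal : IsL0Balanced P U) (hccp : HasRelCCP P U) (x : E) :
    ∃ ρ : Ω →ₘ[P] ℝ, 0 ≤ ρ ∧ (∀ ξ ∈ Lspos P, x ∈ ξ • U → ρ ≤ ξ) ∧
      (∀ δ ∈ Lspos P, x ∈ (ρ + δ) • U) := by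
  classical
  set S : Set (Ω →ₘ[P] ℝ) := {ξ | ξ ∈ Lspos P ∧ x ∈ ξ • U} with hSdef
  have hSne : S.Nonempty := by
    obtain ⟨ξ, h1, h2⟩ := habs x
    exact ⟨ξ, h1, h2⟩
  have hSinf : ∀ ξ ∈ S, ∀ η ∈ S, ξ ⊓ η ∈ S :=
    fun ξ hξ η hη => ⟨inf_mem_Lspos hξ.1 hη.1, smul_mem_inf hconv hξ.2 hη.2⟩
  set φ : (Ω →ₘ[P] ℝ) → ℝ := fun ξ => ∫ ω, Real.arctan (ξ ω) ∂P with hφdef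
  have hφint : ∀ ξ : Ω →ₘ[P] ℝ, Integrable (fun ω => Real.arctan (ξ ω)) P :=
    fun ξ => arctan_integrable ξ.aestronglyMeasurable
  have hφmono : ∀ ξ η : Ω →ₘ[P] ℝ, ξ ≤ η → φ ξ ≤ φ η := by
    intro ξ η h
    refine integral_mono_ae (hφint ξ) (hφint η) ?_
    filter_upwards [le_iff.1 h] with ω hω
    exact Real.arctan_strictMono.monotone hω
  have hφbdd : BddBelow (φ '' S) := by
    refine ⟨-2, ?_⟩
    rintro r ⟨ξ, _, rfl⟩
    have : ∫ ω, (-2 : ℝ) ∂P ≤ φ ξ := by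
      refine integral_mono_ae (integrable_const _) (hφint ξ) ?_
      refine Filter.Eventually.of_forall fun ω => ?_
      have h1 := Real.neg_pi_div_two_lt_arctan (ξ ω)
      have h2 := Real.pi_le_four
      simp only
      linarith
    simpa using this
  set m : ℝ := sInf (φ '' S) with hmdef
  have hseq : ∀ n : ℕ, ∃ ξ ∈ S, φ ξ < m + 1 / (n + 1) := by
    intro n
    have h1 : sInf (φ '' S) < m + 1 / (n + 1) := by
      rw [← hmdef]; have : (0:ℝ) < 1 / (n+1) := by positivity
      linarith
    obtain ⟨r, hr, hlt⟩ := exists_lt_of_csInf_lt (hSne.image φ) h1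
    obtain ⟨ξ, hξ, rfl⟩ := hr
    exact ⟨ξ, hξ, hlt⟩
  choose ξn hξnS hξnlt using hseq
  set ζ : ℕ → Ω →ₘ[P] ℝ := fun n => Nat.rec (ξn 0) (fun n z => z ⊓ ξn (n + 1)) n with hζdef
  have hζ0 : ζ 0 = ξn 0 := rfl
  have hζsucc : ∀ n, ζ (n + 1) = ζ n ⊓ ξn (n + 1) := fun n => rfl
  have hζS : ∀ n, ζ n ∈ S := by
    intro n; induction n with
    | zero => exact hξnS 0
    | succ n ih => rw [hζsucc]; exact hSinf _ ih _ (hξnS (n+1))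
  have hζanti : ∀ n, ζ (n + 1) ≤ ζ n := fun n => by rw [hζsucc]; exact inf_le_left
  have hζle : ∀ n, ζ n ≤ ξn n := by
    intro n; cases n with
    | zero => exact le_refl _
    | succ n => rw [hζsucc]; exact inf_le_right
  have hφζlt : ∀ n, φ (ζ n) < m + 1 / (n + 1) :=
    fun n => lt_of_le_of_lt (hφmono _ _ (hζle n)) (hξnlt n)
  have hφζge : ∀ n, m ≤ φ (ζ n) := fun n => csInf_le hφbdd ⟨ζ n, hζS n, rfl⟩
  set g : ℕ → Ω → ℝ := fun n => mrep (ζ n) with hgdef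
  have hgm : ∀ n, Measurable (g n) := fun n => mrep_measurable _
  set q : Ω → ℝ := fun ω => ⨅ n, max (g n ω) 0 with hqdef
  have hqm : Measurable q := Measurable.iInf fun n => (hgm n).max measurable_const
  set p : Ω →ₘ[P] ℝ := AEEqFun.mk q hqm.aestronglyMeasurable with hpdef
  have hpq : ⇑p =ᵐ[P] q := AEEqFun.coeFn_mk _ _
  have hgood : ∀ᵐ ω ∂P, (∀ n, 0 < g n ω) ∧ (∀ n, g (n + 1) ω ≤ g n ω) ∧
      (∀ n, g n ω = (ζ n) ω) := by
    have h1 : ∀ᵐ ω ∂P, ∀ n, 0 < g n ω ∧ g n ω = (ζ n) ω := by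
      rw [MeasureTheory.ae_all_iff]
      intro n
      filter_upwards [(hζS n).1, mrep_ae (ζ n)] with ω a b
      refine ⟨?_, b.symm⟩
      show (0:ℝ) < mrep (ζ n) ω
      rw [← b]; exact a
    have h2 : ∀ᵐ ω ∂P, ∀ n, g (n + 1) ω ≤ g n ω := by
      rw [MeasureTheory.ae_all_iff]
      intro n
      filter_upwards [le_iff.1 (hζanti n), mrep_ae (ζ n), mrep_ae (ζ (n+1))] with ω a b c
      show mrep (ζ (n+1)) ω ≤ mrep (ζ n) ω
      rw [← b, ← c]; exact a
    filter_upwards [h1, h2] with ω a b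
    exact ⟨fun n => (a n).1, b, fun n => (a n).2⟩
  -- on the good set, q is the infimum of the antitone sequence g · ω
  have hkey : ∀ᵐ ω ∂P, (∀ n, 0 < g n ω) ∧ (∀ n, g (n+1) ω ≤ g n ω) ∧
      (∀ n, g n ω = (ζ n) ω) ∧ q ω = ⨅ n, g n ω ∧ 0 ≤ q ω ∧ (∀ n, q ω ≤ g n ω) ∧
      Filter.Tendsto (fun n => g n ω) Filter.atTop (nhds (q ω)) := by
    filter_upwards [hgood] with ω ⟨h1, h2, h3⟩
    have hmax : ∀ n, max (g n ω) 0 = g n ω := fun n => max_eq_left (le_of_lt (h1 n))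
    have hq' : q ω = ⨅ n, g n ω := by
      rw [hqdef]; simp only
      congr 1; funext n; exact hmax n
    have hanti : Antitone fun n => g n ω := antitone_nat_of_succ_le h2
    have hbdd : BddBelow (Set.range fun n => g n ω) := by
      refine ⟨0, ?_⟩; rintro r ⟨n, rfl⟩; exact le_of_lt (h1 n)
    have htd : Filter.Tendsto (fun n => g n ω) Filter.atTop (nhds (⨅ n, g n ω)) :=
      tendsto_atTop_ciInf hanti hbdd
    refine ⟨h1, h2, h3, hq', ?_, ?_, by rw [hq']; exact htd⟩
    · rw [hq']; exact le_ciInf fun n => le_of_lt (h1 n)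
    · intro n; rw [hq']; exact ciInf_le hbdd n
  have hpnonneg : (0 : Ω →ₘ[P] ℝ) ≤ p := by
    rw [le_iff]
    filter_upwards [hpq, coeFn_zero'] with ω a b
    rw [a, b, hqdef]
    exact le_ciInf fun n => le_max_right _ _
  -- integral identities
  have hint_g : ∀ n, ∫ ω, Real.arctan (g n ω) ∂P = φ (ζ n) := by
    intro n
    refine integral_congr_ae ?_
    filter_upwards [mrep_ae (ζ n)] with ω a
    show Real.arctan (mrep (ζ n) ω) = Real.arctan ((ζ n) ω)
    rw [← a]
  have harctanbd : ∀ t : ℝ, ‖Real.arctan t‖ ≤ Real.pi / 2 := by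
    intro t
    rw [Real.norm_eq_abs, abs_le]
    exact ⟨(Real.neg_pi_div_two_lt_arctan _).le, (Real.arctan_lt_pi_div_two _).le⟩
  have htendq : Filter.Tendsto (fun n => ∫ ω, Real.arctan (g n ω) ∂P) Filter.atTop
      (nhds (∫ ω, Real.arctan (q ω) ∂P)) := by
    refine MeasureTheory.tendsto_integral_of_dominated_convergence
      (fun _ => Real.pi / 2)
      (fun n => (Real.continuous_arctan.measurable.comp (hgm n)).aestronglyMeasurable)
      (integrable_const _)
      (fun n => Filter.Eventually.of_forall fun ω => harctanbd _) ?_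
    filter_upwards [hkey] with ω hω
    exact (Real.continuous_arctan.continuousAt.tendsto).comp hω.2.2.2.2.2.2
  have hφp : ∫ ω, Real.arctan (q ω) ∂P = m := by
    have hup : Filter.Tendsto (fun n : ℕ => m + 1 / (n + 1 : ℝ)) Filter.atTop (nhds m) := by
      have := tendsto_const_nhds (x := m) (f := Filter.atTop (α := ℕ)) |>.add
        tendsto_one_div_add_atTop_nhds_zero_nat
      simpa using this
    have h1 : Filter.Tendsto (fun n => φ (ζ n)) Filter.atTop (nhds m) :=
      tendsto_of_tendsto_of_tendsto_of_le_of_le tendsto_const_nhds hup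
        (fun n => hφζge n) (fun n => (hφζlt n).le)
    have h2 : Filter.Tendsto (fun n => φ (ζ n)) Filter.atTop
        (nhds (∫ ω, Real.arctan (q ω) ∂P)) := by
      have : (fun n => φ (ζ n)) = fun n => ∫ ω, Real.arctan (g n ω) ∂P := by
        funext n; rw [hint_g n]
      rw [this]; exact htendq
    exact tendsto_nhds_unique h2 h1
  refine ⟨p, hpnonneg, ?_, ?_⟩
  · -- inf property
    intro ξ hξ1 hξ2
    have hξS : ξ ∈ S := ⟨hξ1, hξ2⟩
    set fξ : Ω → ℝ := mrep ξ with hfξ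
    have hfξm : Measurable fξ := mrep_measurable ξ
    have hgem : ∀ n, m ≤ ∫ ω, Real.arctan (min (g n ω) (fξ ω)) ∂P := by
      intro n
      have hcong : (fun ω => Real.arctan (min (g n ω) (fξ ω))) =ᵐ[P]
          (fun ω => Real.arctan ((ζ n ⊓ ξ) ω)) := by
        filter_upwards [AEEqFun.coeFn_inf (ζ n) ξ, mrep_ae (ζ n), mrep_ae ξ] with ω a b c
        rw [a]
        have : min (g n ω) (fξ ω) = (ζ n) ω ⊓ ξ ω := by
          rw [b, c]
        rw [this]
      rw [integral_congr_ae hcong]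
      exact csInf_le hφbdd ⟨ζ n ⊓ ξ, hSinf _ (hζS n) _ hξS, rfl⟩
    have htend2 : Filter.Tendsto (fun n => ∫ ω, Real.arctan (min (g n ω) (fξ ω)) ∂P)
        Filter.atTop (nhds (∫ ω, Real.arctan (min (q ω) (fξ ω)) ∂P)) := by
      refine MeasureTheory.tendsto_integral_of_dominated_convergence
        (fun _ => Real.pi / 2)
        (fun n => (Real.continuous_arctan.measurable.comp
          ((hgm n).min hfξm)).aestronglyMeasurable)
        (integrable_const _)
        (fun n => Filter.Eventually.of_forall fun ω => harctanbd _) ?_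
      filter_upwards [hkey] with ω hω
      exact (Real.continuous_arctan.continuousAt.tendsto).comp
        (hω.2.2.2.2.2.2.min tendsto_const_nhds)
    have hminge : m ≤ ∫ ω, Real.arctan (min (q ω) (fξ ω)) ∂P :=
      ge_of_tendsto htend2 (Filter.Eventually.of_forall hgem)
    have hmin_meas : Measurable fun ω => min (q ω) (fξ ω) := hqm.min hfξm
    set F : Ω → ℝ := fun ω => Real.arctan (q ω) - Real.arctan (min (q ω) (fξ ω)) with hF
    have hFnn : 0 ≤ F := by
      intro ω
      simp only [hF, Pi.zero_apply, sub_nonneg]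
      exact Real.arctan_strictMono.monotone (min_le_left _ _)
    have hFint : Integrable F P :=
      (arctan_integrable hqm.aestronglyMeasurable).sub
        (arctan_integrable hmin_meas.aestronglyMeasurable)
    have hFzero : ∫ ω, F ω ∂P = 0 := by
      have h1 : ∫ ω, F ω ∂P ≤ 0 := by
        rw [hF]
        rw [integral_sub (arctan_integrable hqm.aestronglyMeasurable)
          (arctan_integrable hmin_meas.aestronglyMeasurable)]
        rw [hφp]
        linarith
      have h2 : 0 ≤ ∫ ω, F ω ∂P := integral_nonneg hFnn
      linarith
    have hFae : F =ᵐ[P] 0 := (integral_eq_zero_iff_of_nonneg hFnn hFint).1 hFzero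
    rw [le_iff]
    filter_upwards [hFae, hpq, mrep_ae ξ] with ω a b c
    rw [b, c]
    have : Real.arctan (q ω) = Real.arctan (min (q ω) (fξ ω)) := by
      have : F ω = 0 := a
      rw [hF] at this; simp only at this; linarith
    have hqmin : q ω = min (q ω) (fξ ω) := Real.arctan_injective this
    calc q ω = min (q ω) (fξ ω) := hqmin
      _ ≤ fξ ω := min_le_right _ _
  · -- attainment
    intro δ hδ
    set dm : Ω → ℝ := mrep δ with hdm
    have hdmm : Measurable dm := mrep_measurable δ
    set B : ℕ → Set Ω := fun n => {ω | g n ω ≤ q ω + dm ω} with hB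
    have hBm : ∀ n, MeasurableSet (B n) := fun n => measurableSet_le (hgm n) (hqm.add hdmm)
    set B' : ℕ → Set Ω := fun n => if n = 0 then B 0 ∪ (⋃ k, B k)ᶜ else B n with hB'
    have hB'm : ∀ n, MeasurableSet (B' n) := by
      intro n
      by_cases h : n = 0
      · simp only [hB', h, if_pos]
        exact (hBm 0).union (MeasurableSet.iUnion hBm).compl
      · simp only [hB', if_neg h]
        exact hBm n
    set A : ℕ → Set Ω := disjointed B' with hA
    have hAm : ∀ n, MeasurableSet (A n) := MeasurableSet.disjointed hB'm
    have hApart : IsMeasPartition A := by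
      refine ⟨hAm, disjoint_disjointed B', ?_⟩
      rw [hA, iUnion_disjointed]
      apply Set.eq_univ_of_forall
      intro ω
      by_cases h : ω ∈ ⋃ k, B k
      · obtain ⟨k, hk⟩ : ∃ k, ω ∈ B k := by simpa using h
        by_cases hk0 : k = 0
        · exact Set.mem_iUnion.2 ⟨0, by simp only [hB', if_pos rfl]; exact Or.inl (hk0 ▸ hk)⟩
        · exact Set.mem_iUnion.2 ⟨k, by simp only [hB', if_neg hk0]; exact hk⟩
      · exact Set.mem_iUnion.2 ⟨0, by simp only [hB', if_pos rfl]; exact Or.inr h⟩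
    set ρ : Ω →ₘ[P] ℝ := p + δ with hρ
    have hρspos : ρ ∈ Lspos P := add_mem_Lspos hpnonneg hδ
    have hρinv : ρ * ainv ρ = 1 := mul_ainv (Lspos_ne_zero hρspos)
    choose u huU hxu using fun n => (hζS n).2
    set xs : ℕ → E := fun n => (ind P (A n) * ζ n * ainv ρ) • u n with hxs
    -- a.e. facts about membership in A n
    have hincl : ∀ᵐ ω ∂P, ∀ n, ω ∈ A n → g n ω ≤ q ω + dm ω := by
      have hD : ∀ᵐ ω ∂P, ω ∈ ⋃ k, B k := by
        filter_upwards [hkey, hδ, mrep_ae δ] with ω hω h1 h2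
        have hdmpos : (0:ℝ) < dm ω := by
          show (0:ℝ) < mrep δ ω
          rw [← h2]; exact h1
        have hpos : q ω < q ω + dm ω := by linarith
        have := hω.2.2.2.2.2.2.eventually_lt_const hpos
        obtain ⟨n, hn⟩ := this.exists
        exact Set.mem_iUnion.2 ⟨n, le_of_lt hn⟩
      filter_upwards [hD] with ω hωD n hωA
      have hsub : A n ⊆ B' n := disjointed_subset B' n
      have := hsub hωA
      by_cases h : n = 0
      · subst h
        simp only [hB', if_pos rfl] at this
        rcases this with h | h
        · exact h
        · exact absurd hωD h
      · simp only [hB', if_neg h] at this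
        exact this
    -- coefficient facts
    have hcoefs : ∀ᵐ ω ∂P, ∀ n,
        (ind P (A n)) ω = (A n).indicator (fun _ => (1:ℝ)) ω ∧ (ζ n) ω = g n ω := by
      rw [MeasureTheory.ae_all_iff]
      intro n
      filter_upwards [coeFn_ind (hAm n), mrep_ae (ζ n)] with ω a b
      exact ⟨a, b⟩
    have hρae : ∀ᵐ ω ∂P, ρ ω = q ω + dm ω ∧ 0 < ρ ω := by
      filter_upwards [AEEqFun.coeFn_add p δ, hpq, mrep_ae δ, hρspos] with ω a b c d
      refine ⟨?_, d⟩
      rw [hρ]; rw [a]; simp only [Pi.add_apply, b]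
      show q ω + δ ω = q ω + mrep δ ω
      rw [← c]
    have hxsU : ∀ n, xs n ∈ U := by
      intro n
      refine hbal (u n) (huU n) _ ?_
      rw [le_iff]
      filter_upwards [hincl, hcoefs, hρae, hkey,
        coeFn_aabs (ind P (A n) * ζ n * ainv ρ),
        AEEqFun.coeFn_mul (ind P (A n) * ζ n) (ainv ρ),
        AEEqFun.coeFn_mul (ind P (A n)) (ζ n), coeFn_ainv ρ, coeFn_one'] with
        ω h1 h2 h3 h4 c1 c2 c3 c4 c5
      rw [c1, c5]
      simp only [Pi.mul_apply] at c2 c3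
      rw [c2, c3, c4, (h2 n).1, (h2 n).2]
      by_cases h : ω ∈ A n
      · rw [Set.indicator_of_mem h, one_mul]
        have hle : g n ω ≤ ρ ω := by rw [h3.1]; exact h1 n h
        have h0g : 0 < g n ω := h4.1 n
        rw [abs_of_nonneg (le_of_lt (mul_pos h0g (inv_pos.2 h3.2)))]
        calc g n ω * (ρ ω)⁻¹ ≤ ρ ω * (ρ ω)⁻¹ := by
              gcongr
              exact le_of_lt (inv_pos.2 h3.2)
          _ = 1 := mul_inv_cancel₀ (ne_of_gt h3.2)
      · rw [Set.indicator_of_notMem h]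
        simp
    set y : E := ainv ρ • x with hy
    have hclaim : ∀ n, ind P (A n) • y = ind P (A n) • xs n := by
      intro n
      have hxn : ζ n • u n = x := hxu n
      have hcoef : ind P (A n) * (ind P (A n) * ζ n * ainv ρ) =
          ind P (A n) * ainv ρ * ζ n := by
        have h2 := ind_mul_ind (P := P) (hAm n)
        calc ind P (A n) * (ind P (A n) * ζ n * ainv ρ)
            = (ind P (A n) * ind P (A n)) * ζ n * ainv ρ := by ring
          _ = ind P (A n) * ζ n * ainv ρ := by rw [h2]
          _ = ind P (A n) * ainv ρ * ζ n := by ring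
      calc ind P (A n) • y = (ind P (A n) * ainv ρ) • x := by rw [hy, ← mul_smul]
        _ = (ind P (A n) * ainv ρ) • (ζ n • u n) := by rw [hxn]
        _ = (ind P (A n) * ainv ρ * ζ n) • u n := by rw [← mul_smul]
        _ = (ind P (A n) * (ind P (A n) * ζ n * ainv ρ)) • u n := by rw [hcoef]
        _ = ind P (A n) • xs n := by rw [hxs, mul_smul]
    have hyU : y ∈ U := hccp xs hxsU A hApart y hclaim
    refine ⟨y, hyU, ?_⟩
    show ρ • y = x
    rw [hy, ← mul_smul, hρinv, one_smul]

end Gauge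

theorem aabs_nonneg (ξ : L0) : 0 ≤ aabs ξ := by
  rw [le_iff]
  filter_upwards [coeFn_aabs ξ, coeFn_zero'] with ω a b
  rw [a, b]; exact abs_nonneg _

theorem mul_nonneg' {ξ η : L0} (h1 : 0 ≤ ξ) (h2 : 0 ≤ η) : 0 ≤ ξ * η := by
  rw [le_iff] at h1 h2 ⊢
  filter_upwards [h1, h2, AEEqFun.coeFn_mul ξ η, coeFn_zero'] with ω a b c d
  rw [c, d]; rw [d] at a b; exact mul_nonneg a b

theorem half_add_half : cst (P := P) (1/2) + cst (1/2) = 1 := by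
  apply ext_ae
  filter_upwards [AEEqFun.coeFn_add (cst (P := P) (1/2)) (cst (1/2)),
    coeFn_cst (P := P) (1/2), coeFn_one'] with ω a b c
  rw [a, c]; simp only [Pi.add_apply, b]; norm_num

section GaugeSem

variable {E : Type*} [AddCommGroup E] [Module (Ω →ₘ[P] ℝ) E] {U : Set E}

theorem gauge_seminorm (hconv : IsL0Convex P U) (hbal : IsL0Balanced P U)
    (p : E → Ω →ₘ[P] ℝ)
    (hnn : ∀ x, 0 ≤ p x)
    (hinf : ∀ x : E, ∀ ξ ∈ Lspos P, x ∈ ξ • U → p x ≤ ξ)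
    (hatt : ∀ x : E, ∀ δ ∈ Lspos P, x ∈ (p x + δ) • U) :
    IsL0Seminorm P p := by
  constructor
  · exact hnn
  · -- homogeneity
    intro ξ x
    apply le_antisymm
    · -- p (ξ • x) ≤ aabs ξ * p x
      apply le_of_forall_add
      intro δ hδ
      have h1pos : aabs ξ + 1 ∈ Lspos P := add_mem_Lspos (aabs_nonneg ξ) one_mem_Lspos
      set δ' : Ω →ₘ[P] ℝ := δ * ainv (aabs ξ + 1) with hδ'def
      have hδ'spos : δ' ∈ Lspos P := mul_mem_Lspos hδ (ainv_mem_Lspos h1pos)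
      obtain ⟨u, hu, hxu'⟩ := hatt x δ' hδ'spos
      have hxu : (p x + δ') • u = x := hxu'
      set c : Ω →ₘ[P] ℝ := aabs ξ * p x + δ with hcdef
      have hc : c ∈ Lspos P := add_mem_Lspos (mul_nonneg' (aabs_nonneg ξ) (hnn x)) hδ
      have hcoef : aabs (ainv c * (ξ * (p x + δ'))) ≤ 1 := by
        rw [le_iff]
        filter_upwards [hc, hδ, le_iff.1 (hnn x),
          ae_aabs (ainv c * (ξ * (p x + δ'))), ae_mul (ainv c) (ξ * (p x + δ')),
          ae_mul ξ (p x + δ'), ae_add (p x) δ', ae_mul δ (ainv (aabs ξ + 1)),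
          ae_ainv (aabs ξ + 1), ae_add (aabs ξ) 1, ae_aabs ξ, ae_ainv c,
          ae_add (aabs ξ * p x) δ, ae_mul (aabs ξ) (p x), ae_zero, ae_one]
          with ω hcpos hδpos hpxnn ca cb cc cd ce cf cg ch ci cj ck cz co
        rw [ca, cb, cc, cd, ce, cf, cg, ch, ci, co]
        rw [cz] at hpxnn
        have hcω : c ω = |ξ ω| * (p x) ω + δ ω := by rw [cj, ck, ch]
        have hcω0 : 0 < c ω := hcpos
        rw [abs_mul, abs_inv, abs_of_pos hcω0]
        have habs2 : |ξ ω * ((p x) ω + δ ω * (|ξ ω| + 1)⁻¹)| ≤ c ω := by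
          rw [abs_mul, hcω]
          have h0 : (0:ℝ) < |ξ ω| + 1 := by positivity
          have h1 : |(p x) ω + δ ω * (|ξ ω| + 1)⁻¹| = (p x) ω + δ ω * (|ξ ω| + 1)⁻¹ := by
            rw [abs_of_nonneg]; positivity
          rw [h1]
          have h2 : |ξ ω| * (δ ω * (|ξ ω| + 1)⁻¹) ≤ δ ω := by
            rw [mul_comm (δ ω), ← mul_assoc]
            calc |ξ ω| * (|ξ ω| + 1)⁻¹ * δ ω ≤ 1 * δ ω := by
                  gcongr
                  rw [← div_eq_mul_inv, div_le_one h0]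
                  linarith
              _ = δ ω := one_mul _
          nlinarith [abs_nonneg (ξ ω)]
        calc (c ω)⁻¹ * |ξ ω * ((p x) ω + δ ω * (|ξ ω| + 1)⁻¹)| ≤ (c ω)⁻¹ * c ω := by
              gcongr
          _ = 1 := inv_mul_cancel₀ (ne_of_gt hcω0)
      refine hinf _ c hc ⟨(ainv c * (ξ * (p x + δ'))) • u, hbal u hu _ hcoef, ?_⟩
      show c • (ainv c * (ξ * (p x + δ'))) • u = ξ • x
      rw [← mul_smul]
      have hcc : c * (ainv c * (ξ * (p x + δ'))) = ξ * (p x + δ') := by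
        calc c * (ainv c * (ξ * (p x + δ'))) = (c * ainv c) * (ξ * (p x + δ')) := by ring
          _ = ξ * (p x + δ') := by rw [mul_ainv (Lspos_ne_zero hc), one_mul]
      rw [hcc, mul_smul, hxu]
    · -- aabs ξ * p x ≤ p (ξ • x)
      apply le_of_forall_add
      intro δ hδ
      set A : Set Ω := {ω | mrep ξ ω ≠ 0} with hAdef
      have hA : MeasurableSet A :=
        ((mrep_measurable ξ) (measurableSet_singleton 0)).compl
      have hAc : MeasurableSet Aᶜ := hA.compl
      set eA : Ω →ₘ[P] ℝ := ind P A with heA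
      set ξ' : Ω →ₘ[P] ℝ := ξ + ind P Aᶜ with hξ'def
      have hξ'facts : ∀ᵐ ω ∂P, ξ' ω = ξ ω + Aᶜ.indicator (fun _ => (1:ℝ)) ω ∧
          ξ ω = mrep ξ ω ∧ eA ω = A.indicator (fun _ => (1:ℝ)) ω := by
        filter_upwards [ae_add ξ (ind P Aᶜ), ae_ind hAc, mrep_ae ξ, ae_ind hA]
          with ω a b c d
        exact ⟨by rw [hξ'def, a, b], c, d⟩
      have hmemA : ∀ᵐ ω ∂P, (ω ∈ A → (ξ' ω = ξ ω ∧ ξ ω ≠ 0 ∧ eA ω = 1)) ∧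
          (ω ∉ A → (ξ' ω = 1 ∧ ξ ω = 0 ∧ eA ω = 0)) := by
        filter_upwards [hξ'facts] with ω ⟨a, b, c⟩
        constructor
        · intro h
          refine ⟨?_, ?_, ?_⟩
          · rw [a, Set.indicator_of_notMem (by simpa using h), add_zero]
          · rw [b]; simpa [hAdef] using h
          · rw [c, Set.indicator_of_mem h]
        · intro h
          have hz : ξ ω = 0 := by rw [b]; simpa [hAdef] using h
          refine ⟨?_, hz, ?_⟩
          · rw [a, Set.indicator_of_mem (by simpa using h), hz, zero_add]
          · rw [c, Set.indicator_of_notMem h]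
      have hξ'ne : ∀ᵐ ω ∂P, ξ' ω ≠ 0 := by
        filter_upwards [hmemA] with ω ⟨h1, h2⟩
        by_cases h : ω ∈ A
        · rw [(h1 h).1]; exact (h1 h).2.1
        · rw [(h2 h).1]; norm_num
      set ρ : Ω →ₘ[P] ℝ := p (ξ • x) + δ with hρdef
      have hρspos : ρ ∈ Lspos P := add_mem_Lspos (hnn _) hδ
      set σ : Ω →ₘ[P] ℝ := p x + δ with hσdef
      have hσspos : σ ∈ Lspos P := add_mem_Lspos (hnn _) hδ
      obtain ⟨v, hv, hxv'⟩ := hatt (ξ • x) δ hδ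
      have hxv : ρ • v = ξ • x := hxv'
      obtain ⟨u, hu, hxu'⟩ := hatt x δ hδ
      have hxu : σ • u = x := hxu'
      set ζ : Ω →ₘ[P] ℝ := eA * aabs (ainv ξ') * ρ + (1 - eA) * σ with hζdef
      have hζfacts : ∀ᵐ ω ∂P, ζ ω = eA ω * |(ξ' ω)⁻¹| * ρ ω + (1 - eA ω) * σ ω := by
        filter_upwards [ae_add (eA * aabs (ainv ξ') * ρ) ((1 - eA) * σ),
          ae_mul (eA * aabs (ainv ξ')) ρ, ae_mul eA (aabs (ainv ξ')),
          ae_aabs (ainv ξ'), ae_ainv ξ', ae_mul (1 - eA) σ,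
          ae_sub (1 : Ω →ₘ[P] ℝ) eA, ae_one] with ω a b c d e f g h
        rw [hζdef, a, b, c, d, e, f, g, h]
      have hζptfacts : ∀ᵐ ω ∂P, (ω ∈ A → ζ ω = |ξ ω|⁻¹ * ρ ω ∧ ξ ω ≠ 0) ∧
          (ω ∉ A → ζ ω = σ ω ∧ ξ ω = 0) := by
        filter_upwards [hζfacts, hmemA] with ω a ⟨h1, h2⟩
        constructor
        · intro h
          obtain ⟨e1, e2, e3⟩ := h1 h
          refine ⟨?_, e2⟩
          rw [a, e3, e1, abs_inv]
          ring
        · intro h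
          obtain ⟨e1, e2, e3⟩ := h2 h
          refine ⟨?_, e2⟩
          rw [a, e3]
          ring
      have hζspos : ζ ∈ Lspos P := by
        rw [mem_Lspos]
        filter_upwards [hζptfacts, hρspos, hσspos] with ω hpt c d
        obtain ⟨h1, h2⟩ := hpt
        by_cases h : ω ∈ A
        · obtain ⟨e1, e2⟩ := h1 h
          rw [e1]
          have : (0:ℝ) < |ξ ω|⁻¹ := inv_pos.2 (abs_pos.2 e2)
          exact mul_pos this c
        · rw [(h2 h).1]; exact d
      have he2 : eA * eA = eA := ind_mul_ind (P := P) hA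
      have hζinv : ζ * ainv ζ = 1 := mul_ainv (Lspos_ne_zero hζspos)
      set cv : Ω →ₘ[P] ℝ := ainv ζ * (eA * ainv ξ' * ρ) + (1 - eA) with hcv
      set cu : Ω →ₘ[P] ℝ := ainv ζ * ((1 - eA) * σ) + eA with hcu
      have hcvfacts : ∀ᵐ ω ∂P, cv ω = (ζ ω)⁻¹ * (eA ω * (ξ' ω)⁻¹ * ρ ω) + (1 - eA ω) := by
        filter_upwards [ae_add (ainv ζ * (eA * ainv ξ' * ρ)) (1 - eA),
          ae_mul (ainv ζ) (eA * ainv ξ' * ρ), ae_mul (eA * ainv ξ') ρ,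
          ae_mul eA (ainv ξ'), ae_ainv ξ', ae_ainv ζ,
          ae_sub (1 : Ω →ₘ[P] ℝ) eA, ae_one] with ω a b c d e f g h
        rw [hcv, a, b, c, d, e, f, g, h]
      have hcufacts : ∀ᵐ ω ∂P, cu ω = (ζ ω)⁻¹ * ((1 - eA ω) * σ ω) + eA ω := by
        filter_upwards [ae_add (ainv ζ * ((1 - eA) * σ)) eA,
          ae_mul (ainv ζ) ((1 - eA) * σ), ae_mul (1 - eA) σ,
          ae_ainv ζ, ae_sub (1 : Ω →ₘ[P] ℝ) eA, ae_one] with ω a b c d e h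
        rw [hcu, a, b, c, d, e, h]
      have hcvU : cv • v ∈ U := by
        refine hbal v hv cv ?_
        rw [le_iff]
        filter_upwards [hcvfacts, hζptfacts, hmemA, hρspos, hζspos,
          ae_aabs cv, ae_one] with ω a ⟨h1, h2⟩ ⟨m1, m2⟩ c d ca co
        rw [ca, co]
        by_cases h : ω ∈ A
        · obtain ⟨e1, e2⟩ := h1 h
          obtain ⟨f1, f2, f3⟩ := m1 h
          rw [a, e1, f1, f3]
          have hξpos : (0:ℝ) < |ξ ω| := abs_pos.2 e2
          have hρpos : (0:ℝ) < ρ ω := c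
          have hval : (|ξ ω|⁻¹ * ρ ω)⁻¹ * (1 * (ξ ω)⁻¹ * ρ ω) + (1 - 1) = |ξ ω| / ξ ω := by
            field_simp
            ring
          rw [hval, abs_div, abs_abs, div_self (abs_ne_zero.2 e2)]
        · obtain ⟨e1, e2⟩ := h2 h
          obtain ⟨f1, f2, f3⟩ := m2 h
          rw [a, f3]
          simp
      have hcuU : cu • u ∈ U := by
        refine hbal u hu cu ?_
        rw [le_iff]
        filter_upwards [hcufacts, hζptfacts, hmemA, hσspos, hζspos,
          ae_aabs cu, ae_one] with ω a hpt hm c d ca co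
        obtain ⟨h1, h2⟩ := hpt
        obtain ⟨m1, m2⟩ := hm
        rw [ca, co]
        by_cases h : ω ∈ A
        · obtain ⟨f1, f2, f3⟩ := m1 h
          rw [a, f3]
          simp
        · obtain ⟨e1, e2⟩ := h2 h
          obtain ⟨f1, f2, f3⟩ := m2 h
          rw [a, e1, f3]
          have hσpos : (0:ℝ) < σ ω := c
          have hval : (σ ω)⁻¹ * ((1 - 0) * σ ω) + 0 = 1 := by
            field_simp
            norm_num
          rw [hval, abs_one]
      have hcomb : eA • (cv • v) + (1 - eA) • (cu • u) ∈ U :=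
        hconv _ hcvU _ hcuU eA (ind_nonneg hA) (ind_le_one hA)
      set w : E := (ainv ζ * (eA * ainv ξ' * ρ)) • v + (ainv ζ * ((1 - eA) * σ)) • u
        with hwdef
      have hq1 : eA * cv = ainv ζ * (eA * ainv ξ' * ρ) := by
        calc eA * cv = (eA * eA) * (ainv ζ * ainv ξ' * ρ) + (eA - eA * eA) := by
              rw [hcv]; ring
          _ = eA * (ainv ζ * ainv ξ' * ρ) + (eA - eA) := by rw [he2]
          _ = ainv ζ * (eA * ainv ξ' * ρ) := by ring
      have hq2 : (1 - eA) * cu = ainv ζ * ((1 - eA) * σ) := by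
        calc (1 - eA) * cu
            = (1 - 2 * eA + eA * eA) * (ainv ζ * σ) + (eA - eA * eA) := by
              rw [hcu]; ring
          _ = (1 - 2 * eA + eA) * (ainv ζ * σ) + (eA - eA) := by rw [he2]
          _ = ainv ζ * ((1 - eA) * σ) := by ring
      have hwU : w ∈ U := by
        have heq : eA • (cv • v) + (1 - eA) • (cu • u) = w := by
          rw [hwdef, ← mul_smul, ← mul_smul, hq1, hq2]
        rwa [heq] at hcomb
      have hζw : ζ • w = x := by
        rw [hwdef, smul_add, ← mul_smul, ← mul_smul]
        have k1 : ζ * (ainv ζ * (eA * ainv ξ' * ρ)) = eA * ainv ξ' * ρ := by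
          calc ζ * (ainv ζ * (eA * ainv ξ' * ρ)) = (ζ * ainv ζ) * (eA * ainv ξ' * ρ) := by
                ring
            _ = eA * ainv ξ' * ρ := by rw [hζinv, one_mul]
        have k2 : ζ * (ainv ζ * ((1 - eA) * σ)) = (1 - eA) * σ := by
          calc ζ * (ainv ζ * ((1 - eA) * σ)) = (ζ * ainv ζ) * ((1 - eA) * σ) := by ring
            _ = (1 - eA) * σ := by rw [hζinv, one_mul]
        rw [k1, k2]
        have hAξ' : eA * ξ' = eA * ξ := by
          apply ext_ae
          filter_upwards [ae_mul eA ξ', ae_mul eA ξ, hmemA] with ω a b hm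
          obtain ⟨m1, m2⟩ := hm
          rw [a, b]
          by_cases h : ω ∈ A
          · rw [(m1 h).1]
          · rw [(m2 h).2.2]; ring
        have hξ'inv : ξ' * ainv ξ' = 1 := mul_ainv hξ'ne
        have hcoefeq : eA * ainv ξ' * ξ = eA := by
          calc eA * ainv ξ' * ξ = (eA * ξ) * ainv ξ' := by ring
            _ = (eA * ξ') * ainv ξ' := by rw [hAξ']
            _ = eA * (ξ' * ainv ξ') := by ring
            _ = eA := by rw [hξ'inv, mul_one]
        have k3 : (eA * ainv ξ' * ρ) • v = eA • x := by
          calc (eA * ainv ξ' * ρ) • v = (eA * ainv ξ') • (ρ • v) := by rw [mul_smul]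
            _ = (eA * ainv ξ') • (ξ • x) := by rw [hxv]
            _ = (eA * ainv ξ' * ξ) • x := by rw [← mul_smul]
            _ = eA • x := by rw [hcoefeq]
        have k4 : ((1 - eA) * σ) • u = (1 - eA) • x := by rw [mul_smul, hxu]
        rw [k3, k4, ← add_smul]
        have heq1 : eA + (1 - eA) = 1 := by ring
        rw [heq1, one_smul]
      have hfinal : p x ≤ ζ := hinf x ζ hζspos ⟨w, hwU, hζw⟩
      show aabs ξ * p x ≤ ρ
      rw [le_iff]
      filter_upwards [le_iff.1 hfinal, hζptfacts, hρspos, le_iff.1 (hnn x),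
        ae_mul (aabs ξ) (p x), ae_aabs ξ, ae_zero] with ω hf hpt hρp hpx cm cab cz
      rw [cm, cab]
      rw [cz] at hpx
      obtain ⟨h1, h2⟩ := hpt
      by_cases h : ω ∈ A
      · obtain ⟨e1, e2⟩ := h1 h
        have hle : (p x) ω ≤ |ξ ω|⁻¹ * ρ ω := by rw [← e1]; exact hf
        have habs : (0:ℝ) < |ξ ω| := abs_pos.2 e2
        calc |ξ ω| * (p x) ω ≤ |ξ ω| * (|ξ ω|⁻¹ * ρ ω) := by gcongr
          _ = ρ ω := by field_simp
      · obtain ⟨e1, e2⟩ := h2 h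
        rw [e2]
        simpa using le_of_lt hρp
  · -- triangle
    intro x y
    apply le_of_forall_add
    intro δ hδ
    set δ' : Ω →ₘ[P] ℝ := cst (1/2) * δ with hδ'def
    have hδ'spos : δ' ∈ Lspos P := mul_mem_Lspos (cst_mem_Lspos (by norm_num)) hδ
    obtain ⟨u, hu, hxu'⟩ := hatt x δ' hδ'spos
    have hxu : (p x + δ') • u = x := hxu'
    obtain ⟨v, hv, hyv'⟩ := hatt y δ' hδ'spos
    have hyv : (p y + δ') • v = y := hyv'
    set a : Ω →ₘ[P] ℝ := p x + δ' with hadef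
    set b : Ω →ₘ[P] ℝ := p y + δ' with hbdef
    have ha : a ∈ Lspos P := add_mem_Lspos (hnn x) hδ'spos
    have hb : b ∈ Lspos P := add_mem_Lspos (hnn y) hδ'spos
    set s : Ω →ₘ[P] ℝ := a + b with hsdef
    have hs : s ∈ Lspos P := add_mem_Lspos (Lspos_nonneg ha) hb
    have hsinv : s * ainv s = 1 := mul_ainv (Lspos_ne_zero hs)
    set lam : Ω →ₘ[P] ℝ := a * ainv s with hlamdef
    have h0lam : 0 ≤ lam := mul_nonneg' (Lspos_nonneg ha) (Lspos_nonneg (ainv_mem_Lspos hs))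
    have h1lam : lam ≤ 1 := by
      rw [le_iff]
      filter_upwards [ha, hb, ae_mul a (ainv s), ae_ainv s, ae_add a b, ae_one]
        with ω c1 c2 c4 c5 c6 c7
      rw [c4, c5, c7]
      have hsab : s ω = a ω + b ω := c6
      rw [hsab, ← div_eq_mul_inv, div_le_one (by linarith)]
      linarith
    have hlam2 : 1 - lam = b * ainv s := by
      have : lam + b * ainv s = 1 := by
        rw [hlamdef, ← add_mul]
        rw [← hsdef, hsinv]
      linear_combination -this
    have hw : lam • u + (1 - lam) • v ∈ U := hconv u hu v hv lam h0lam h1lam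
    have hsw : s • (lam • u + (1 - lam) • v) = x + y := by
      rw [smul_add, ← mul_smul, ← mul_smul]
      have h1 : s * lam = a := by
        rw [hlamdef]
        calc s * (a * ainv s) = a * (s * ainv s) := by ring
          _ = a := by rw [hsinv, mul_one]
      have h2 : s * (1 - lam) = b := by
        rw [hlam2]
        calc s * (b * ainv s) = b * (s * ainv s) := by ring
          _ = b := by rw [hsinv, mul_one]
      rw [h1, h2, hadef, hbdef, hxu, hyv]
    have hps : p (x + y) ≤ s := hinf (x + y) s hs ⟨_, hw, hsw⟩
    refine le_trans hps (le_of_eq ?_)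
    rw [hsdef, hadef, hbdef]
    have hhalf : δ' + δ' = δ := by
      rw [hδ'def, ← add_mul, half_add_half, one_mul]
    calc p x + δ' + (p y + δ') = p x + p y + (δ' + δ') := by ring
      _ = p x + p y + δ := by rw [hhalf]

end GaugeSem

end Stmt18







/-- Theorem 3.10: for a topological L⁰-module (E, 𝒯), the topology 𝒯 is induced by some
family of L⁰-seminorms iff there is a neighborhood base 𝒰 of 0 consisting of L⁰-convex,
L⁰-absorbent, L⁰-balanced sets with the relative countable concatenation property. -/
theorem statement18
    {Ω : Type*} [MeasurableSpace Ω] (P : Measure Ω) [IsProbabilityMeasure P]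
    {E : Type*} [AddCommGroup E] [Module (Ω →ₘ[P] ℝ) E]
    (T : TopologicalSpace E)
    (Tc : TopologicalSpace (Ω →ₘ[P] ℝ))
    (hTc : ∀ W : Set (Ω →ₘ[P] ℝ),
      IsOpen[Tc] W ↔ ∀ ξ ∈ W, ∃ ε ∈ Lspos P, ∀ η ∈ ball P ε, ξ + η ∈ W)
    (haddcont : Continuous[@instTopologicalSpaceProd E E T T, T]
      (fun p : E × E => p.1 + p.2))
    (hsmulcont : Continuous[@instTopologicalSpaceProd (Ω →ₘ[P] ℝ) E Tc T, T]
      (fun p : (Ω →ₘ[P] ℝ) × E => p.1 • p.2)) :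
    (∃ Ps : Set (E → Ω →ₘ[P] ℝ), (∀ p ∈ Ps, IsL0Seminorm P p) ∧
        ∀ V : Set E, IsOpen[T] V ↔
          ∀ y ∈ V, ∃ Qs : Set (E → Ω →ₘ[P] ℝ), Qs.Finite ∧ Qs ⊆ Ps ∧
            ∃ ε ∈ Lspos P, ∀ u : E, (∀ q ∈ Qs, q u ≤ ε) → y + u ∈ V) ↔
      (∃ 𝒰 : Set (Set E), (@nhds E T 0).HasBasis (· ∈ 𝒰) id ∧
        ∀ U ∈ 𝒰, IsL0Convex P U ∧ IsL0Absorbent P U ∧ IsL0Balanced P U ∧ HasRelCCP P U) := by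
  letI := T
  letI := Tc
  constructor
  · rintro ⟨Ps, hPs, hopen⟩
    exact Stmt18.forward_dir Ps hPs hopen
  · rintro ⟨𝒰, hbasis, hprops⟩
    have hgauge : ∀ U : Set E, U ∈ 𝒰 → ∃ p : E → Ω →ₘ[P] ℝ, IsL0Seminorm P p ∧
        (∀ x : E, ∀ ξ ∈ Lspos P, x ∈ ξ • U → p x ≤ ξ) ∧
        (∀ x : E, ∀ δ ∈ Lspos P, x ∈ (p x + δ) • U) := by
      intro U hU
      obtain ⟨hconv, habs, hbal, hccp⟩ := hprops U hU
      obtain ⟨p, hp⟩ : ∃ p : E → Ω →ₘ[P] ℝ, ∀ x : E, 0 ≤ p x ∧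
          (∀ ξ ∈ Lspos P, x ∈ ξ • U → p x ≤ ξ) ∧
          (∀ δ ∈ Lspos P, x ∈ (p x + δ) • U) := by
        choose p h1 h2 h3 using Stmt18.gauge_exists hconv habs hbal hccp
        exact ⟨p, fun x => ⟨h1 x, h2 x, h3 x⟩⟩
      refine ⟨p, Stmt18.gauge_seminorm hconv hbal p (fun x => (hp x).1)
        (fun x ξ hξ => (hp x).2.1 ξ hξ) (fun x => (hp x).2.2),
        fun x ξ hξ => (hp x).2.1 ξ hξ, fun x => (hp x).2.2⟩
    choose pU hsem hinfU hattU using hgauge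
    set Ps : Set (E → Ω →ₘ[P] ℝ) := {q | ∃ U : Set E, ∃ h : U ∈ 𝒰, q = pU U h}
      with hPsdef
    have hhalf : Stmt18.cst (P := P) (1/2) ∈ Lspos P := Stmt18.cst_mem_Lspos (by norm_num)
    -- half-ball inside U
    have hqin : ∀ (U : Set E) (hU : U ∈ 𝒰), ∀ x : E,
        pU U hU x ≤ Stmt18.cst (1/2) → x ∈ U := by
      intro U hU x hx
      obtain ⟨hconv, habs, hbal, hccp⟩ := hprops U hU
      obtain ⟨u, hu, hux⟩ := hattU U hU x (Stmt18.cst (1/2)) hhalf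
      have hux' : (pU U hU x + Stmt18.cst (1/2)) • u = x := hux
      have hcoef : aabs (pU U hU x + Stmt18.cst (1/2)) ≤ 1 := by
        rw [Stmt18.le_iff]
        filter_upwards [Stmt18.le_iff.1 hx, Stmt18.le_iff.1 ((hsem U hU).nonneg x),
          Stmt18.ae_aabs (pU U hU x + Stmt18.cst (1/2)),
          Stmt18.ae_add (pU U hU x) (Stmt18.cst (1/2)), Stmt18.ae_cst (P := P) (1/2),
          Stmt18.ae_zero, Stmt18.ae_one] with ω a b c d e f g
        rw [c, d, e, g]
        rw [e] at a
        rw [f] at b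
        rw [abs_of_nonneg (by linarith)]
        linarith
      have := hbal u hu _ hcoef
      rwa [hux'] at this
    have hball : ∀ (U : Set E) (hU : U ∈ 𝒰), ∀ ε ∈ Lspos P, ∀ x : E,
        x ∈ ε • U → pU U hU x ≤ ε := fun U hU ε hε x hx => hinfU U hU x ε hε hx
    refine ⟨Ps, ?_, ?_⟩
    · rintro q ⟨U, hU, rfl⟩
      exact hsem U hU
    · intro V
      constructor
      · intro hV y hy
        have hN : {u : E | y + u ∈ V} ∈ nhds (0 : E) :=
          Stmt18.nhds_translate haddcont (hV.mem_nhds hy)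
        obtain ⟨U, hU, hUN⟩ := hbasis.mem_iff.1 hN
        refine ⟨{pU U hU}, Set.finite_singleton _, ?_, Stmt18.cst (1/2), hhalf, ?_⟩
        · intro q hq
          rw [Set.mem_singleton_iff] at hq
          exact ⟨U, hU, hq⟩
        · intro u hu
          have : pU U hU u ≤ Stmt18.cst (1/2) := hu _ (Set.mem_singleton _)
          exact hUN (hqin U hU u this)
      · intro h
        rw [Stmt18.isOpen_iff_nhds_add haddcont]
        intro y hy
        obtain ⟨Qs, hfin, hsub, ε, hε, hb⟩ := h y hy
        have hball_mem : (⋂ q ∈ Qs, {u : E | q u ≤ ε}) ∈ nhds (0 : E) := by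
          rw [Filter.biInter_mem hfin]
          intro q hq
          obtain ⟨U, hU, rfl⟩ := hsub hq
          have hUnhds : U ∈ nhds (0 : E) := hbasis.mem_of_mem hU
          have hsmul : ε • U ∈ nhds (0 : E) :=
            Stmt18.smul_set_mem_nhds hsmulcont hUnhds hε
          refine Filter.mem_of_superset hsmul ?_
          intro x hx
          exact hball U hU ε hε x hx
        refine Filter.mem_of_superset hball_mem ?_
        intro u hu
        refine hb u ?_
        intro q hq
        have := Set.mem_iInter₂.1 hu q hq
        exact this
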